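/- In the discrete-time uniprocessor preemptive fixed-priority scheduling model, let C and C' be two execution-requirement assignments with C'(i,k) ≤ C(i,k) for every task i and job index k (releases, periods, phases and priorities being identical). For a priority threshold p ∈ ℕ and a time t ∈ ℕ, let W_C(p,t) denote the total remaining work at time t of all jobs of tasks with priority at least p that are released at or before t, i.e., the sum over such jobs of their requirement minus the service they have received during [r(i,k), t) under schedule σ_C. Then for every p and every t, W_{C'}(p,t) ≤ W_C(p,t). -/

import Mathlib

open scoped BigOperators

/-- Release time of the `k`-th job of task `i`: `r(i,k) = O i + k · T i`. -/
def release {ι : Type} (O T : ι → ℕ) (i : ι) (k : ℕ) : ℕ := O i + k * T i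

open Classical in
/-- Service received by job `j` during `[rel, t)` under schedule `σ`: the number of
instants in `[rel, t)` at which `σ` serves `j`. -/
noncomputable def service {ι : Type} (σ : ℕ → Option (ι × ℕ)) (rel : ℕ)
    (j : ι × ℕ) (t : ℕ) : ℕ :=
  ((Finset.Ico rel t).filter (fun u => σ u = some j)).card

/-- Job `j = (i,k)` is pending at time `t`: it is released at or before `t` and has
received strictly fewer units of service than its requirement during `[r(i,k), t)`. -/
def Pending {ι : Type} (O T : ι → ℕ) (C : ι → ℕ → ℕ) (σ : ℕ → Option (ι × ℕ))
    (j : ι × ℕ) (t : ℕ) : Prop :=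
  release O T j.1 j.2 ≤ t ∧ service σ (release O T j.1 j.2) j t < C j.1 j.2

/-- `σ` is the preemptive fixed-priority schedule for requirements `C`: at each instant `t`
it serves nothing if no job is pending, and otherwise serves a pending job of the task of
highest priority among tasks with a pending job, choosing among pending jobs of that task
one with earliest release time. -/
def IsFPSchedule {ι : Type} (π O T : ι → ℕ) (C : ι → ℕ → ℕ)
    (σ : ℕ → Option (ι × ℕ)) : Prop :=
  ∀ t : ℕ,
    ((¬ ∃ j, Pending O T C σ j t) → σ t = none) ∧
    ((∃ j, Pending O T C σ j t) →
      ∃ j, σ t = some j ∧ Pending O T C σ j t ∧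
        (∀ j', Pending O T C σ j' t → π j'.1 ≤ π j.1) ∧
        (∀ k' : ℕ, Pending O T C σ (j.1, k') t →
          release O T j.1 j.2 ≤ release O T j.1 k'))

/-- Start time of job `j` under schedule `σ`: the first instant at which `j` is served
(`⊤` if `j` is never served). -/
noncomputable def startTime {ι : Type} (σ : ℕ → Option (ι × ℕ)) (j : ι × ℕ) : ℕ∞ :=
  sInf {t : ℕ∞ | ∃ u : ℕ, t = (u : ℕ∞) ∧ σ u = some j}

/-- Finish time of job `j = (i,k)` under schedule `σ` with requirements `C`: the least `t`
such that `j` has received `C i k` units of service during `[r(i,k), t)` (`⊤` if no such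
instant exists). -/
noncomputable def finishTime {ι : Type} (O T : ι → ℕ) (C : ι → ℕ → ℕ)
    (σ : ℕ → Option (ι × ℕ)) (j : ι × ℕ) : ℕ∞ :=
  sInf {t : ℕ∞ | ∃ u : ℕ, t = (u : ℕ∞) ∧
    service σ (release O T j.1 j.2) j u = C j.1 j.2}

open Classical in
/-- Total remaining work `W_C(p,t)` at time `t` of all jobs of tasks with priority at
least `p` that are released at or before `t`: the sum over such jobs of their requirement
minus the service received during `[r(i,k), t)` under `σ`.  (With `T i ≥ 1`, every job
released at or before `t` has index `k ≤ t`, so the sum over `k ∈ range (t+1)` covers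
all released jobs.) -/
noncomputable def remWork {ι : Type} [Fintype ι] (π O T : ι → ℕ) (C : ι → ℕ → ℕ)
    (σ : ℕ → Option (ι × ℕ)) (p t : ℕ) : ℕ :=
  ∑ j ∈ (Finset.univ ×ˢ Finset.range (t + 1)).filter
      (fun j : ι × ℕ => p ≤ π j.1 ∧ release O T j.1 j.2 ≤ t),
    (C j.1 j.2 - service σ (release O T j.1 j.2) j t)

open Classical in
lemma service_succ {ι : Type} (σ : ℕ → Option (ι × ℕ)) (rel : ℕ) (j : ι × ℕ) (t : ℕ)
    (h : rel ≤ t) :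
    service σ rel j (t+1) = service σ rel j t + (if σ t = some j then 1 else 0) := by
  classical
  simp only [service]
  rw [Nat.Ico_succ_right_eq_insert_Ico h, Finset.filter_insert]
  split_ifs with h1
  · rw [Finset.card_insert_of_notMem (by simp)]
  · rfl

lemma service_self {ι : Type} (σ : ℕ → Option (ι × ℕ)) (j : ι × ℕ) (t : ℕ) :
    service σ t j t = 0 := by simp [service]

lemma le_release {ι : Type} (O T : ι → ℕ) (hT : ∀ i, 1 ≤ T i) (i : ι) (k : ℕ) :
    k ≤ release O T i k := by
  have h : k * 1 ≤ k * T i := Nat.mul_le_mul_left k (hT i)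
  simp only [release]; omega

open Classical in
noncomputable def arr {ι : Type} [Fintype ι] (π O T : ι → ℕ) (C : ι → ℕ → ℕ)
    (p t : ℕ) : ℕ :=
  ∑ j ∈ (Finset.univ ×ˢ Finset.range (t + 1)).filter
      (fun j : ι × ℕ => p ≤ π j.1 ∧ release O T j.1 j.2 = t),
    C j.1 j.2

lemma remWork_zero {ι : Type} [Fintype ι] (π O T : ι → ℕ) (C : ι → ℕ → ℕ)
    (σ : ℕ → Option (ι × ℕ)) (p : ℕ) :
    remWork π O T C σ p 0 = arr π O T C p 0 := by
  classical
  simp [remWork, arr, service, Nat.le_zero]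

lemma remWork_succ {ι : Type} [Fintype ι] (π O T : ι → ℕ) (C : ι → ℕ → ℕ)
    (σ : ℕ → Option (ι × ℕ)) (hT : ∀ i, 1 ≤ T i) (hσ : IsFPSchedule π O T C σ)
    (p t : ℕ) :
    remWork π O T C σ p (t+1) =
      (remWork π O T C σ p t - if 0 < remWork π O T C σ p t then 1 else 0)
        + arr π O T C p (t+1) := by
  classical
  set Sold : Finset (ι × ℕ) := (Finset.univ ×ˢ Finset.range (t + 1)).filter
      (fun j : ι × ℕ => p ≤ π j.1 ∧ release O T j.1 j.2 ≤ t) with hSold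
  set Snew : Finset (ι × ℕ) := (Finset.univ ×ˢ Finset.range (t + 2)).filter
      (fun j : ι × ℕ => p ≤ π j.1 ∧ release O T j.1 j.2 = t + 1) with hSnew
  have hmemold : ∀ j : ι × ℕ, j ∈ Sold ↔ p ≤ π j.1 ∧ release O T j.1 j.2 ≤ t := by
    intro j
    simp only [hSold, Finset.mem_filter, Finset.mem_product, Finset.mem_univ,
      Finset.mem_range, true_and]
    constructor
    · rintro ⟨_, h2⟩; exact h2
    · rintro ⟨h1, h2⟩
      exact ⟨lt_of_le_of_lt (le_trans (le_release O T hT j.1 j.2) h2) (Nat.lt_succ_self t),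
        h1, h2⟩
  have hsplit : (Finset.univ ×ˢ Finset.range (t + 2)).filter
      (fun j : ι × ℕ => p ≤ π j.1 ∧ release O T j.1 j.2 ≤ t + 1) = Sold ∪ Snew := by
    ext j
    simp only [Finset.mem_union, Finset.mem_filter, Finset.mem_product, Finset.mem_univ,
      Finset.mem_range, true_and, hmemold, hSnew]
    constructor
    · rintro ⟨hk, h1, h2⟩
      rcases Nat.lt_or_ge (release O T j.1 j.2) (t+1) with h | h
      · exact Or.inl ⟨h1, Nat.lt_succ_iff.mp h⟩
      · exact Or.inr ⟨hk, h1, le_antisymm h2 h⟩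
    · rintro (⟨h1, h2⟩ | ⟨hk, h1, h2⟩)
      · exact ⟨lt_of_le_of_lt (le_trans (le_release O T hT j.1 j.2) h2) (by omega),
          h1, le_trans h2 (Nat.le_succ t)⟩
      · exact ⟨hk, h1, le_of_eq h2⟩
  have hdisj : Disjoint Sold Snew := by
    rw [Finset.disjoint_left]
    intro j hj hj'
    rw [hmemold] at hj
    simp only [hSnew, Finset.mem_filter] at hj'
    omega
  have hrw : remWork π O T C σ p (t+1) =
      (∑ j ∈ Sold, (C j.1 j.2 - service σ (release O T j.1 j.2) j (t+1)))
      + arr π O T C p (t+1) := by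
    rw [remWork]
    rw [show t + 1 + 1 = t + 2 from rfl, hsplit, Finset.sum_union hdisj]
    congr 1
    rw [arr]
    apply Finset.sum_congr rfl
    intro j hj
    simp only [hSnew, Finset.mem_filter] at hj
    rw [hj.2.2, service_self]; simp
  -- now handle the Sold sum
  rw [hrw]
  congr 1
  have hWsum : remWork π O T C σ p t
      = ∑ j ∈ Sold, (C j.1 j.2 - service σ (release O T j.1 j.2) j t) := by
    rw [remWork, ← hSold]
  by_cases hserve : ∃ j ∈ Sold, σ t = some j
  · obtain ⟨j0, hj0mem, hj0σ⟩ := hserve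
    have hpend : Pending O T C σ j0 t := by
      have hex : ∃ j, Pending O T C σ j t := by
        by_contra hcon
        have := (hσ t).1 hcon
        rw [this] at hj0σ; simp at hj0σ
      obtain ⟨j1, hj1σ, hj1p, _⟩ := (hσ t).2 hex
      have heq : j1 = j0 := by
        rw [hj0σ] at hj1σ; exact (Option.some.inj hj1σ).symm
      rwa [heq] at hj1p
    have hrel : release O T j0.1 j0.2 ≤ t := ((hmemold j0).mp hj0mem).2
    have hlt : service σ (release O T j0.1 j0.2) j0 t < C j0.1 j0.2 := hpend.2
    have hsum1 : ∀ j ∈ Sold.erase j0,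
        C j.1 j.2 - service σ (release O T j.1 j.2) j (t+1)
          = C j.1 j.2 - service σ (release O T j.1 j.2) j t := by
      intro j hj
      have hne : j ≠ j0 := Finset.ne_of_mem_erase hj
      have hjmem := Finset.mem_of_mem_erase hj
      rw [service_succ _ _ _ _ ((hmemold j).mp hjmem).2, if_neg (by
        intro hc; exact hne (Option.some.inj (hj0σ.symm.trans hc)).symm)]
      simp
    have hWdecomp : remWork π O T C σ p t
        = (C j0.1 j0.2 - service σ (release O T j0.1 j0.2) j0 t)
          + ∑ j ∈ Sold.erase j0, (C j.1 j.2 - service σ (release O T j.1 j.2) j t) := by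
      rw [hWsum]; exact (Finset.add_sum_erase _ _ hj0mem).symm
    have hGdecomp : (∑ j ∈ Sold, (C j.1 j.2 - service σ (release O T j.1 j.2) j (t+1)))
        = (C j0.1 j0.2 - (service σ (release O T j0.1 j0.2) j0 t + 1))
          + ∑ j ∈ Sold.erase j0, (C j.1 j.2 - service σ (release O T j.1 j.2) j t) := by
      rw [← Finset.add_sum_erase _ _ hj0mem]
      congr 1
      · rw [service_succ _ _ _ _ hrel, if_pos hj0σ]
      · exact Finset.sum_congr rfl hsum1
    have hpos : 0 < remWork π O T C σ p t := by rw [hWdecomp]; omega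
    rw [if_pos hpos, hGdecomp, hWdecomp]
    omega
  · push_neg at hserve
    have hsum : ∀ j ∈ Sold,
        C j.1 j.2 - service σ (release O T j.1 j.2) j (t+1)
          = C j.1 j.2 - service σ (release O T j.1 j.2) j t := by
      intro j hj
      rw [service_succ _ _ _ _ ((hmemold j).mp hj).2, if_neg (hserve j hj)]
      simp
    have hzero : remWork π O T C σ p t = 0 := by
      by_contra hne
      have hpos : 0 < remWork π O T C σ p t := Nat.pos_of_ne_zero hne
      rw [hWsum] at hpos
      obtain ⟨j0, hj0mem, hj0pos⟩ : ∃ j ∈ Sold,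
          0 < C j.1 j.2 - service σ (release O T j.1 j.2) j t := by
        by_contra hcon
        push_neg at hcon
        simp only [Nat.le_zero] at hcon
        rw [Finset.sum_eq_zero hcon] at hpos
        exact Nat.lt_irrefl 0 hpos
      have hj0p : Pending O T C σ j0 t :=
        ⟨((hmemold j0).mp hj0mem).2, by omega⟩
      obtain ⟨j1, hj1σ, hj1p, hj1max, _⟩ := (hσ t).2 ⟨j0, hj0p⟩
      have hj1mem : j1 ∈ Sold := by
        rw [hmemold]
        exact ⟨le_trans ((hmemold j0).mp hj0mem).1 (hj1max j0 hj0p), hj1p.1⟩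
      exact (hserve j1 hj1mem) hj1σ
    rw [Finset.sum_congr rfl hsum, ← hWsum, hzero]
    simp

lemma arr_mono {ι : Type} [Fintype ι] (π O T : ι → ℕ) (C C' : ι → ℕ → ℕ)
    (hle : ∀ i k, C' i k ≤ C i k) (p t : ℕ) :
    arr π O T C' p t ≤ arr π O T C p t :=
  Finset.sum_le_sum (fun j _ => hle j.1 j.2)


/-- **Monotonicity of remaining higher-priority work in the execution requirements.**
If `C' ≤ C` pointwise (with identical releases, periods, phases and priorities), then for
every priority threshold `p` and every time `t`, the total remaining work of jobs of
priority at least `p` released at or before `t` is no larger under the fixed-priority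
schedule for `C'` than under the one for `C`. -/
theorem remaining_work_monotone_in_requirements {ι : Type} [Fintype ι]
    (π O T : ι → ℕ) (hπ : Function.Injective π) (hT : ∀ i, 1 ≤ T i)
    (C C' : ι → ℕ → ℕ) (hC : ∀ i k, 1 ≤ C i k) (hC' : ∀ i k, 1 ≤ C' i k)
    (hle : ∀ i k, C' i k ≤ C i k)
    (σ σ' : ℕ → Option (ι × ℕ))
    (hσ : IsFPSchedule π O T C σ) (hσ' : IsFPSchedule π O T C' σ') :
    ∀ (p t : ℕ), remWork π O T C' σ' p t ≤ remWork π O T C σ p t := by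
  intro p t
  induction t with
  | zero =>
    rw [remWork_zero, remWork_zero]
    exact arr_mono π O T C C' hle p 0
  | succ t ih =>
    rw [remWork_succ π O T C σ hT hσ p t, remWork_succ π O T C' σ' hT hσ' p t]
    have ha := arr_mono π O T C C' hle p (t+1)
    split_ifs with h1 h2 <;> omega
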